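/- Let n, p ≥ 1, let Φ be a real n×p matrix, W a symmetric positive semidefinite real n×n matrix, θ₀ ∈ ℝ^p with support S = {j : θ₀,ⱼ ≠ 0}, ε ∈ ℝ^n, y = Φθ₀ + ε, λ > 0, and c₃ > 0. Suppose θ̂ ∈ ℝ^p satisfies the basic inequality (1/(2n))·(y − Φθ̂)ᵀW(y − Φθ̂) + λ‖θ̂‖₁ ≤ (1/(2n))·(y − Φθ₀)ᵀW(y − Φθ₀) + λ‖θ₀‖₁, that ‖ΦᵀWε/n‖∞ ≤ λ/2, and that the restricted eigenvalue condition (1/n)·aᵀΦᵀWΦa ≥ (c₃/2)·‖a_S‖₂² holds for all a ∈ ℝ^p with ‖a_{S^c}‖₁ ≤ 3‖a_S‖₁. Then, writing δ = θ̂ − θ₀, one has ‖δ_S‖₂ ≤ 6λ√|S|/c₃. -/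

import Mathlib

open Matrix Finset

set_option maxHeartbeats 1000000 in
/-- ℓ₂-on-support error bound from combining (A.3) and (A.4):
`‖δ_S‖₂ ≤ 6λ√|S|/c₃` for `δ = θ̂ − θ₀`. -/
theorem lasso_l2_support_error_bound
    (n p : ℕ) (hn : 1 ≤ n) (hp : 1 ≤ p)
    (Φ : Matrix (Fin n) (Fin p) ℝ) (W : Matrix (Fin n) (Fin n) ℝ)
    (hW : W.PosSemidef)
    (θ0 θhat : Fin p → ℝ)
    (S : Finset (Fin p)) (hS : ∀ j, j ∈ S ↔ θ0 j ≠ 0)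
    (ε : Fin n → ℝ) (y : Fin n → ℝ) (hy : y = Φ.mulVec θ0 + ε)
    (lam : ℝ) (hlam : 0 < lam) (c3 : ℝ) (hc3 : 0 < c3)
    (hbasic :
      (1 / (2 * (n : ℝ))) * ((y - Φ.mulVec θhat) ⬝ᵥ W.mulVec (y - Φ.mulVec θhat))
          + lam * ∑ j, |θhat j|
        ≤ (1 / (2 * (n : ℝ))) * ((y - Φ.mulVec θ0) ⬝ᵥ W.mulVec (y - Φ.mulVec θ0))
          + lam * ∑ j, |θ0 j|)
    (hnoise : ∀ j, |(Φᵀ.mulVec (W.mulVec ε)) j / (n : ℝ)| ≤ lam / 2)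
    (hRE : ∀ a : Fin p → ℝ, (∑ j ∈ Sᶜ, |a j|) ≤ 3 * ∑ j ∈ S, |a j| →
      c3 / 2 * (∑ j ∈ S, (a j) ^ 2) ≤ (1 / (n : ℝ)) * (a ⬝ᵥ (Φᵀ * W * Φ).mulVec a)) :
    Real.sqrt (∑ j ∈ S, (θhat j - θ0 j) ^ 2) ≤ 6 * lam * Real.sqrt S.card / c3 := by
  have hn' : (0:ℝ) < n := by exact_mod_cast hn
  set δ : Fin p → ℝ := θhat - θ0 with hδdef
  have hδj : ∀ j, θhat j - θ0 j = δ j := fun j => rfl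
  set z : Fin p → ℝ := Φᵀ.mulVec (W.mulVec ε) with hz
  set Q : ℝ := δ ⬝ᵥ (Φᵀ * W * Φ).mulVec δ with hQdef
  set T : ℝ := δ ⬝ᵥ z with hTdef
  set A : ℝ := ∑ j ∈ S, |δ j| with hAdef
  set B : ℝ := ∑ j ∈ Sᶜ, |δ j| with hBdef
  have hA0 : 0 ≤ A := Finset.sum_nonneg fun j _ => abs_nonneg _
  have hB0 : 0 ≤ B := Finset.sum_nonneg fun j _ => abs_nonneg _
  -- PSD of Φᵀ W Φ
  have hPSD : (Φᵀ * W * Φ).PosSemidef := by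
    have := hW.conjTranspose_mul_mul_same Φ
    simpa using this
  have hQ0 : 0 ≤ Q := by simpa using hPSD.dotProduct_mulVec_nonneg δ
  -- symm of W
  have hWsymm : Wᵀ = W := by have h := hW.1; simp at h; exact h
  -- algebraic identities
  set u : Fin n → ℝ := Φ.mulVec δ with hu
  have huδ : u = Φ.mulVec θhat - Φ.mulVec θ0 := by rw [hu, hδdef, Matrix.mulVec_sub]
  have h1 : y - Φ.mulVec θhat = ε - u := by rw [hy, huδ]; abel
  have h2 : y - Φ.mulVec θ0 = ε := by rw [hy]; abel
  have uWu : Q = u ⬝ᵥ W.mulVec u := by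
    rw [hQdef, show (Φᵀ * W * Φ) *ᵥ δ = Φᵀ *ᵥ (W *ᵥ (Φ *ᵥ δ)) by
      rw [Matrix.mulVec_mulVec, Matrix.mulVec_mulVec, Matrix.mul_assoc],
      Matrix.dotProduct_mulVec, Matrix.vecMul_transpose]
  have uWε : u ⬝ᵥ W.mulVec ε = T := by
    rw [hTdef, hz, Matrix.dotProduct_mulVec δ Φᵀ, Matrix.vecMul_transpose]
  have εWu : ε ⬝ᵥ W.mulVec u = T := by
    rw [Matrix.dotProduct_mulVec, ← Matrix.mulVec_transpose, hWsymm,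
      dotProduct_comm, uWε]
  have expand : (ε - u) ⬝ᵥ W.mulVec (ε - u) = ε ⬝ᵥ W.mulVec ε - 2 * T + Q := by
    rw [Matrix.mulVec_sub, dotProduct_sub, sub_dotProduct,
      sub_dotProduct, εWu, uWε, uWu]
    ring
  rw [h1, h2, expand] at hbasic
  set E : ℝ := ε ⬝ᵥ W.mulVec ε with hE
  -- key inequality
  have key : (1 / (2 * (n:ℝ))) * Q ≤ (1 / (n:ℝ)) * T
      + lam * ((∑ j, |θ0 j|) - ∑ j, |θhat j|) := by
    have hexp : (1 / (2 * (n:ℝ))) * (E - 2 * T + Q)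
        = (1 / (2 * (n:ℝ))) * E - (1 / (n:ℝ)) * T + (1 / (2 * (n:ℝ))) * Q := by
      field_simp
    rw [hexp] at hbasic
    linarith
  -- noise bound : T ≤ (n*lam/2) * (A+B)
  have hsplit : ∑ j, |δ j| = A + B := by
    rw [hAdef, hBdef, Finset.sum_add_sum_compl]
  have hT : T ≤ (n * lam / 2) * (A + B) := by
    rw [← hsplit, hTdef, dotProduct]
    rw [show ((n:ℝ) * lam / 2) * ∑ j, |δ j| = ∑ j, |δ j| * (n * lam / 2) by
      rw [← Finset.sum_mul, mul_comm]]
    apply Finset.sum_le_sum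
    intro j _
    have hzj : |z j| ≤ n * lam / 2 := by
      have h := hnoise j
      rw [abs_div, abs_of_pos hn', div_le_iff₀ hn'] at h
      calc |z j| ≤ lam / 2 * n := h
        _ = n * lam / 2 := by ring
    calc δ j * z j ≤ |δ j * z j| := le_abs_self _
      _ = |δ j| * |z j| := abs_mul _ _
      _ ≤ |δ j| * (n * lam / 2) := by
          exact mul_le_mul_of_nonneg_left hzj (abs_nonneg _)
  -- penalty bound
  have hSc : ∀ j ∈ Sᶜ, θ0 j = 0 := fun j hj => by
    have := (hS j).mp
    by_contra h
    exact (Finset.mem_compl.mp hj) ((hS j).mpr h)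
  have hpen : (∑ j, |θ0 j|) - (∑ j, |θhat j|) ≤ A - B := by
    have g0 : (∑ j ∈ S, |θ0 j|) + (∑ j ∈ Sᶜ, |θ0 j|) = ∑ j, |θ0 j| :=
      Finset.sum_add_sum_compl S _
    have g1 : (∑ j ∈ S, |θhat j|) + (∑ j ∈ Sᶜ, |θhat j|) = ∑ j, |θhat j| :=
      Finset.sum_add_sum_compl S _
    have z0 : (∑ j ∈ Sᶜ, |θ0 j|) = 0 :=
      Finset.sum_eq_zero fun j hj => by rw [hSc j hj, abs_zero]
    have z1 : (∑ j ∈ Sᶜ, |θhat j|) = B := by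
      rw [hBdef]
      exact Finset.sum_congr rfl fun j hj => by
        rw [hδdef, Pi.sub_apply, hSc j hj, sub_zero]
    have e2 : (∑ j ∈ S, |θ0 j|) - (∑ j ∈ S, |θhat j|) ≤ A := by
      rw [hAdef, ← Finset.sum_sub_distrib]
      apply Finset.sum_le_sum
      intro j _
      calc |θ0 j| - |θhat j| ≤ |θ0 j - θhat j| := abs_sub_abs_le_abs_sub _ _
        _ = |δ j| := by rw [abs_sub_comm, hδdef]; rfl
    linarith
  -- combine: (1/(2n)) Q ≤ (3lam/2) A - (lam/2) B
  have hTn : (1 / (n:ℝ)) * T ≤ (lam / 2) * (A + B) := by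
    have := mul_le_mul_of_nonneg_left hT (le_of_lt (one_div_pos.mpr hn'))
    calc (1 / (n:ℝ)) * T ≤ (1 / (n:ℝ)) * ((n * lam / 2) * (A + B)) := this
      _ = (lam / 2) * (A + B) := by field_simp
  have key2 : (1 / (2 * (n:ℝ))) * Q ≤ (3 * lam / 2) * A - (lam / 2) * B := by
    have := key.trans (by linarith [mul_le_mul_of_nonneg_left hpen hlam.le] :
      (1 / (n:ℝ)) * T + lam * ((∑ j, |θ0 j|) - ∑ j, |θhat j|)
        ≤ (lam / 2) * (A + B) + lam * (A - B))
    linarith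
  -- cone condition
  have hQpos : 0 ≤ (1 / (2 * (n:ℝ))) * Q := by positivity
  have hcone : B ≤ 3 * A := by nlinarith
  -- RE condition
  have hREδ := hRE δ (by rw [← hBdef, ← hAdef]; exact hcone)
  have hQn : (1 / (n:ℝ)) * Q = 2 * ((1 / (2 * (n:ℝ))) * Q) := by
    field_simp
  have hmain : c3 / 2 * (∑ j ∈ S, (δ j) ^ 2) ≤ 3 * lam * A := by
    calc c3 / 2 * (∑ j ∈ S, (δ j) ^ 2) ≤ (1 / (n:ℝ)) * Q := hREδ
      _ = 2 * ((1 / (2 * (n:ℝ))) * Q) := hQn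
      _ ≤ 2 * ((3 * lam / 2) * A - (lam / 2) * B) := by linarith
      _ ≤ 3 * lam * A := by nlinarith
  -- Cauchy-Schwarz
  set t : ℝ := Real.sqrt (∑ j ∈ S, (δ j) ^ 2) with htdef
  set s : ℝ := Real.sqrt S.card with hsdef
  have ht0 : 0 ≤ t := Real.sqrt_nonneg _
  have hs0 : 0 ≤ s := Real.sqrt_nonneg _
  have ht2 : t ^ 2 = ∑ j ∈ S, (δ j) ^ 2 := Real.sq_sqrt (Finset.sum_nonneg fun j _ => sq_nonneg _)
  have hs2 : s ^ 2 = (S.card : ℝ) := Real.sq_sqrt (Nat.cast_nonneg _)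
  have hCS : A ^ 2 ≤ (S.card : ℝ) * ∑ j ∈ S, (δ j) ^ 2 := by
    have h := Finset.sum_mul_sq_le_sq_mul_sq S (fun _ => (1:ℝ)) (fun j => |δ j|)
    simpa [hAdef, sq_abs, mul_comm] using h
  have hAst : A ≤ s * t := by
    have h1 : A ^ 2 ≤ (s * t) ^ 2 := by
      rw [mul_pow, hs2, ht2]; exact hCS
    have := Real.sqrt_le_sqrt h1
    rwa [Real.sqrt_sq hA0, Real.sqrt_sq (mul_nonneg hs0 ht0)] at this
  -- conclude
  have hfinal : c3 / 2 * t ^ 2 ≤ 3 * lam * (s * t) := by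
    rw [ht2]
    refine hmain.trans ?_
    have h3 : 3 * lam * A ≤ 3 * lam * (s * t) :=
      mul_le_mul_of_nonneg_left hAst (by positivity)
    linarith only [hmain, h3]
  show t ≤ 6 * lam * s / c3
  rcases eq_or_lt_of_le ht0 with h | h
  · rw [← h]; positivity
  · rw [le_div_iff₀ hc3]
    have h6 : c3 * t * t ≤ 6 * lam * s * t := by nlinarith [hfinal, ht2]
    have h7 : c3 * t ≤ 6 * lam * s := le_of_mul_le_mul_right h6 h
    linarith only [h7]
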